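/- Let L > 0, let n ≥ 3, and let X be an L-exponentially distributed random vector on ℝ^d. Then Pr[‖X‖ ≥ 2·e·d·L^{−1}·ln n] ≤ n^{−d}. -/

import Mathlib

open MeasureTheory ProbabilityTheory
open scoped ENNReal

noncomputable section

/-- The Euclidean (ℓ²) norm of a vector in `ℝ^d`. -/
def e2norm {d : ℕ} (x : Fin d → ℝ) : ℝ := Real.sqrt (∑ i, (x i) ^ 2)

/-- A random vector `X : Ω → ℝ^d` is `L`-exponentially distributed if its law has density
`x ↦ C exp(-L ‖x‖₂)` w.r.t. Lebesgue measure, for some normalizing constant `C`. -/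
def IsLExpDistributed {d : ℕ} {Ω : Type*} [MeasurableSpace Ω] (μ : Measure Ω)
    (L : ℝ) (X : Ω → Fin d → ℝ) : Prop :=
  Measurable X ∧ ∃ C : ℝ, μ.map X =
    volume.withDensity fun x => ENNReal.ofReal (C * Real.exp (-L * e2norm x))

lemma e2norm_continuous {d : ℕ} : Continuous (e2norm (d := d)) :=
  Real.continuous_sqrt.comp (continuous_finset_sum _ fun i _ => (continuous_apply i).pow 2)

lemma e2norm_smul {d : ℕ} {c : ℝ} (hc : 0 ≤ c) (x : Fin d → ℝ) :
    e2norm (c • x) = c * e2norm x := by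
  simp only [e2norm, Pi.smul_apply, smul_eq_mul, mul_pow, ← Finset.mul_sum,
    Real.sqrt_mul (sq_nonneg c), Real.sqrt_sq hc]

lemma lintegral_comp_smul_aux {d : ℕ} (f : (Fin d → ℝ) → ℝ≥0∞) (hf : Measurable f)
    {c : ℝ} (hc : c ≠ 0) :
    ∫⁻ x, f (c • x) = ENNReal.ofReal |(c ^ d)⁻¹| * ∫⁻ x, f x := by
  have h := Measure.map_addHaar_smul (volume : Measure (Fin d → ℝ)) hc
  rw [← lintegral_map hf (measurable_const_smul c), h, lintegral_smul_measure,
    Module.finrank_fin_fun, smul_eq_mul]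

/-- if `X` is `L`-exponentially distributed on `ℝ^d` and `n ≥ 3`, then
`Pr[‖X‖ ≥ 2 e d L⁻¹ ln n] ≤ n^{-d}`. -/
theorem stmt5 {d : ℕ} {Ω : Type*} [MeasurableSpace Ω] (μ : Measure Ω)
    [IsProbabilityMeasure μ] (L : ℝ) (hL : 0 < L) (n : ℕ) (hn : 3 ≤ n)
    (X : Ω → Fin d → ℝ) (hX : IsLExpDistributed μ L X) :
    (μ {ω | 2 * Real.exp 1 * d * L⁻¹ * Real.log n ≤ e2norm (X ω)}).toReal ≤
      ((n : ℝ) ^ d)⁻¹ := by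
  obtain ⟨hXm, C, hmap⟩ := hX
  set R : ℝ := 2 * Real.exp 1 * d * L⁻¹ * Real.log n with hR
  clear_value R
  set f : (Fin d → ℝ) → ℝ≥0∞ := fun x => ENNReal.ofReal (C * Real.exp (-L * e2norm x)) with hf
  clear_value f
  have hfm0 : Measurable fun x : Fin d → ℝ => ENNReal.ofReal (C * Real.exp (-L * e2norm x)) :=
    (measurable_const.mul ((e2norm_continuous.measurable.const_mul (-L)).exp)).ennreal_ofReal
  have hfm : Measurable f := by rw [hf]; exact hfm0
  have hS : MeasurableSet {x : Fin d → ℝ | R ≤ e2norm x} :=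
    measurableSet_le measurable_const e2norm_continuous.measurable
  have hμS : μ {ω | R ≤ e2norm (X ω)} = ∫⁻ x in {x | R ≤ e2norm x}, f x := by
    have hpre : {ω | R ≤ e2norm (X ω)} = X ⁻¹' {x | R ≤ e2norm x} := rfl
    rw [hpre, ← Measure.map_apply hXm hS, hmap, withDensity_apply _ hS]
  have hnorm : ∫⁻ x, f x = 1 := by
    have h1 : (μ.map X) Set.univ = 1 := by
      have : IsProbabilityMeasure (μ.map X) := Measure.isProbabilityMeasure_map hXm.aemeasurable
      exact measure_univ
    rw [hmap] at h1
    rwa [withDensity_apply _ MeasurableSet.univ, Measure.restrict_univ] at h1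
  have he1 : (0:ℝ) < Real.exp 1 := Real.exp_pos 1
  have he2 : (2:ℝ) < Real.exp 1 := by have := Real.exp_one_gt_d9; linarith
  have he3 : Real.exp 1 < 3 := by have := Real.exp_one_lt_d9; linarith
  have hn3 : (3:ℝ) ≤ (n:ℝ) := by exact_mod_cast hn
  have hnpos : (0:ℝ) < n := by linarith
  have hlogn : 1 ≤ Real.log n := by
    rw [Real.le_log_iff_exp_le hnpos]; linarith
  set s : ℝ := L - L / Real.exp 1 with hs
  clear_value s
  have hspos : 0 < s := by
    rw [hs, sub_pos, div_lt_iff₀ he1]; nlinarith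
  rcases le_or_gt C 0 with hC | hC
  · exfalso
    have hz : ∫⁻ x, f x = 0 := by
      rw [hf]
      simp only [lintegral_eq_zero_iff hfm0]
      refine Filter.Eventually.of_forall fun x => ?_
      exact ENNReal.ofReal_eq_zero.2 (mul_nonpos_of_nonpos_of_nonneg hC (Real.exp_pos _).le)
    rw [hnorm] at hz; exact one_ne_zero hz
  have hmono : ∫⁻ x in {x | R ≤ e2norm x}, f x ≤
      ENNReal.ofReal (Real.exp (-(s * R))) *
        ∫⁻ (x : Fin d → ℝ), ENNReal.ofReal (C * Real.exp (-(L / Real.exp 1) * e2norm x)) := by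
    have hhm : Measurable fun x : Fin d → ℝ =>
        ENNReal.ofReal (C * Real.exp (-(L / Real.exp 1) * e2norm x)) :=
      (measurable_const.mul ((e2norm_continuous.measurable.const_mul _).exp)).ennreal_ofReal
    calc ∫⁻ x in {x | R ≤ e2norm x}, f x
        ≤ ∫⁻ x in {x | R ≤ e2norm x}, ENNReal.ofReal (Real.exp (-(s * R))) *
            ENNReal.ofReal (C * Real.exp (-(L / Real.exp 1) * e2norm x)) := by
          refine setLIntegral_mono (measurable_const.mul hhm) fun x hx => ?_
          rw [hf, ← ENNReal.ofReal_mul (Real.exp_pos _).le]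
          apply ENNReal.ofReal_le_ofReal
          have hx' : R ≤ e2norm x := hx
          rw [mul_comm (Real.exp (-(s * R))) _, mul_assoc, ← Real.exp_add]
          apply mul_le_mul_of_nonneg_left _ hC.le
          apply Real.exp_le_exp.2
          have heq : -L * e2norm x = -(L / Real.exp 1) * e2norm x - s * e2norm x := by
            rw [hs]; field_simp; ring
          rw [heq]
          have : s * R ≤ s * e2norm x := mul_le_mul_of_nonneg_left hx' hspos.le
          linarith
      _ ≤ ∫⁻ x, ENNReal.ofReal (Real.exp (-(s * R))) *
            ENNReal.ofReal (C * Real.exp (-(L / Real.exp 1) * e2norm x)) :=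
          setLIntegral_le_lintegral _ _
      _ = ENNReal.ofReal (Real.exp (-(s * R))) *
            ∫⁻ (x : Fin d → ℝ), ENNReal.ofReal (C * Real.exp (-(L / Real.exp 1) * e2norm x)) :=
          lintegral_const_mul _ hhm
  have hscale : ∫⁻ (x : Fin d → ℝ), ENNReal.ofReal (C * Real.exp (-(L / Real.exp 1) * e2norm x)) =
      ENNReal.ofReal (Real.exp 1 ^ d) := by
    have hinv : ((Real.exp 1)⁻¹ : ℝ) ≠ 0 := inv_ne_zero he1.ne'
    have hcomp : ∀ x : Fin d → ℝ, f ((Real.exp 1)⁻¹ • x) =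
        ENNReal.ofReal (C * Real.exp (-(L / Real.exp 1) * e2norm x)) := by
      intro x
      rw [hf]
      simp only
      rw [e2norm_smul (inv_nonneg.2 he1.le)]
      congr 3
      field_simp
    calc ∫⁻ (x : Fin d → ℝ), ENNReal.ofReal (C * Real.exp (-(L / Real.exp 1) * e2norm x))
        = ∫⁻ x, f ((Real.exp 1)⁻¹ • x) := by simp_rw [hcomp]
      _ = ENNReal.ofReal |(((Real.exp 1)⁻¹ : ℝ) ^ d)⁻¹| * ∫⁻ x, f x :=
          lintegral_comp_smul_aux f hfm hinv
      _ = ENNReal.ofReal (Real.exp 1 ^ d) := by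
          rw [hnorm, mul_one, inv_pow, inv_inv, abs_of_pos (pow_pos he1 d)]
  have hreal : Real.exp (-(s * R)) * Real.exp 1 ^ d ≤ ((n : ℝ) ^ d)⁻¹ := by
    have hsR : s * R = (2 * Real.exp 1 - 2) * ((d:ℝ) * Real.log n) := by
      rw [hs, hR]; field_simp
    have hnd : ((n : ℝ) ^ d)⁻¹ = Real.exp (-((d:ℝ) * Real.log n)) := by
      rw [Real.exp_neg, Real.exp_nat_mul, Real.exp_log hnpos]
    have h2 : (1:ℝ) ≤ (2 * Real.exp 1 - 3) * Real.log n := by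
      nlinarith [mul_nonneg (by linarith : (0:ℝ) ≤ 2 * Real.exp 1 - 4)
        (by linarith : (0:ℝ) ≤ Real.log n)]
    have h3 : (d:ℝ) - s * R ≤ -((d:ℝ) * Real.log n) := by
      rw [hsR]
      nlinarith [mul_le_mul_of_nonneg_left h2 (Nat.cast_nonneg d : (0:ℝ) ≤ (d:ℝ))]
    rw [← Real.exp_nat_mul, mul_one, ← Real.exp_add, hnd]
    exact Real.exp_le_exp.2 (by linarith)
  have hbound : μ {ω | R ≤ e2norm (X ω)} ≤ ENNReal.ofReal (((n : ℝ) ^ d)⁻¹) := by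
    rw [hμS]
    refine le_trans hmono ?_
    rw [hscale, ← ENNReal.ofReal_mul (Real.exp_pos _).le]
    exact ENNReal.ofReal_le_ofReal hreal
  exact ENNReal.toReal_le_of_le_ofReal (by positivity) hbound

end
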